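/- Let G be a countable locally finite group, A a finite alphabet, X ⊆ A^G a G-SFT, and Y ⊆ A^G a nonempty G-shift with Y ⊊ X (proper subset). Let {F_n} be a Følner sequence for G, and suppose log|L_{F_n}(X)| / |F_n| → h_X and log|L_{F_n}(Y)| / |F_n| → h_Y for real numbers h_X, h_Y. Then h_Y < h_X; that is, every G-SFT over a countable locally finite group is entropy minimal. -/

import Mathlib

open scoped Pointwise symmDiff

namespace LFPaper

variable {G A B : Type*}

/-- The right shift action: `(shift g x) h = x (h * g)`. -/
def shift [Group G] (g : G) (x : G → A) : G → A := fun h => x (h * g)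

/-- Restriction of a configuration to a finite shape. -/
def restrictF (F : Finset G) (x : G → A) : F → A := fun a => x a

/-- A `G`-shift space: a closed, shift-invariant subset of the full shift. -/
def IsShiftSpace [Group G] [TopologicalSpace A] (X : Set (G → A)) : Prop :=
  IsClosed X ∧ ∀ g : G, ∀ x ∈ X, shift g x ∈ X

/-- A `G`-shift of finite type: the set of configurations avoiding a finite
set of forbidden patterns on a finite shape. -/
def IsSFT [Group G] (X : Set (G → A)) : Prop :=
  ∃ (F : Finset G) (P : Set (F → A)),
    X = {x : G → A | ∀ g : G, restrictF F (shift g x) ∉ P}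

/-- The `F`-language of `X`: all restrictions of elements of `X` to `F`. -/
def language (X : Set (G → A)) (F : Finset G) : Set (F → A) :=
  {w | ∃ x ∈ X, restrictF F x = w}

/-- Strong irreducibility of a shift. -/
def StronglyIrreducible [Group G] (X : Set (G → A)) : Prop :=
  ∃ K : Finset G, ∀ (Fu Fv : Finset G) (u : Fu → A) (v : Fv → A),
    Disjoint (Fu : Set G) ((K : Set G) * (Fv : Set G)) →
    u ∈ language X Fu → v ∈ language X Fv →
    ∃ x ∈ X, restrictF Fu x = u ∧ restrictF Fv x = v

/-- The free `G`-extension of an `H`-shift `Y`: all configurations whose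
restriction to every right coset of `H` (pulled back to `H`) lies in `Y`. -/
def freeExt [Group G] (H : Subgroup G) (Y : Set (H → A)) : Set (G → A) :=
  {x : G → A | ∀ g : G, (fun h : H => x ((h : G) * g)) ∈ Y}

/-- Local finiteness of a group: every finitely generated subgroup is finite. -/
def IsLocallyFinite (G : Type*) [Group G] : Prop :=
  ∀ S : Finset G, Finite ↥(Subgroup.closure (S : Set G))

/-- A (left) Følner sequence for a countable group. -/
def IsFolner [Group G] (F : ℕ → Finset G) : Prop :=
  (∀ n, (F n).Nonempty) ∧ (∀ g : G, ∃ n, g ∈ F n) ∧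
  ∀ g : G, Filter.Tendsto
    (fun n => (Set.ncard ((((fun h => g * h) '' (F n : Set G))) ∆ ((F n : Set G))) : ℝ) /
      ((F n).card : ℝ))
    Filter.atTop (nhds 0)

/-- Cardinality of the `F`-language. -/
noncomputable def langCard (X : Set (G → A)) (F : Finset G) : ℕ :=
  (language X F).ncard

/-- A shift-commuting self-homeomorphism of `X` (an automorphism of the shift `X`). -/
def IsAutomorphism [Group G] [TopologicalSpace A] (X : Set (G → A)) (φ : Equiv.Perm X) : Prop :=
  Continuous φ ∧ Continuous φ.symm ∧
  ∀ (g : G) (x y : X), (y : G → A) = shift g (x : G → A) →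
    (φ y : G → A) = shift g ((φ x : G → A))

section Aux

set_option linter.unusedSectionVars false

variable [Group G]

lemma shift_shift (g g' : G) (x : G → A) : shift g' (shift g x) = shift (g' * g) x := by
  funext h; simp [shift, mul_assoc]

lemma shift_one (x : G → A) : shift (1 : G) x = x := by
  funext h; simp [shift]

lemma exists_sep [TopologicalSpace A] [DiscreteTopology A]
    {Y : Set (G → A)} (hY : IsClosed Y) {y₀ : G → A} (hy₀ : y₀ ∉ Y) :
    ∃ E : Finset G, ∀ y : G → A, (∀ a ∈ E, y a = y₀ a) → y ∉ Y := by
  have hopen := hY.isOpen_compl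
  rw [isOpen_pi_iff] at hopen
  obtain ⟨E, u, hu, hsub⟩ := hopen y₀ hy₀
  refine ⟨E, fun y hy => hsub (Set.mem_pi.mpr fun a ha => ?_)⟩
  rw [hy a ha]; exact (hu a ha).2

lemma mk_eq_mk_iff {K : Subgroup G} {a b : G} :
    Quotient.mk (QuotientGroup.rightRel K) a = Quotient.mk (QuotientGroup.rightRel K) b ↔
      b * a⁻¹ ∈ K :=
  ⟨fun h => QuotientGroup.rightRel_apply.mp (Quotient.exact h),
   fun h => Quotient.sound (QuotientGroup.rightRel_apply.mpr h)⟩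

lemma innerCard {K : Subgroup G} (hK : (K : Set G).Finite) (I : Finset G)
    (hIco : ∀ a ∈ I, ∀ b : G, b * a⁻¹ ∈ K → b ∈ I)
    (πI : Finset (Quotient (QuotientGroup.rightRel K)))
    (hπI : ∀ q, q ∈ πI ↔ ∃ a ∈ I, Quotient.mk (QuotientGroup.rightRel K) a = q) :
    I.card = πI.card * hK.toFinset.card := by
  classical
  set π : G → Quotient (QuotientGroup.rightRel K) := Quotient.mk (QuotientGroup.rightRel K)
    with hπ
  have hout : ∀ q : Quotient (QuotientGroup.rightRel K), π (Quotient.out q) = q :=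
    fun q => Quotient.out_eq q
  have hIeq : I = πI.biUnion (fun q => hK.toFinset.image (fun k => k * Quotient.out q)) := by
    ext a
    simp only [Finset.mem_biUnion, Finset.mem_image, Set.Finite.mem_toFinset]
    constructor
    · intro haI
      refine ⟨π a, (hπI _).mpr ⟨a, haI, rfl⟩, a * (Quotient.out (π a))⁻¹, ?_, ?_⟩
      · exact mk_eq_mk_iff.mp (hout (π a))
      · exact inv_mul_cancel_right a _
    · rintro ⟨q, hq, k, hk, rfl⟩
      obtain ⟨a₀, ha₀, ha₀q⟩ := (hπI q).mp hq
      have h1 : Quotient.out q * a₀⁻¹ ∈ K := mk_eq_mk_iff.mp (ha₀q.trans (hout q).symm)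
      have : k * Quotient.out q * a₀⁻¹ ∈ K := by
        rw [mul_assoc]; exact K.mul_mem hk h1
      exact hIco a₀ ha₀ _ this
  rw [hIeq, Finset.card_biUnion, Finset.sum_congr rfl
      (fun q _ => Finset.card_image_of_injective _ (fun k k' hh => by
        exact mul_right_cancel hh)), Finset.sum_const, smul_eq_mul]
  intro q hq q' hq' hne
  simp only [Finset.disjoint_left, Finset.mem_image, Set.Finite.mem_toFinset]
  rintro x ⟨k, hk, rfl⟩ ⟨k', hk', hx⟩
  apply hne
  have e1 : π (k * Quotient.out q) = q := by
    rw [hπ]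
    rw [show (Quotient.mk (QuotientGroup.rightRel K) (k * Quotient.out q)) =
      Quotient.mk (QuotientGroup.rightRel K) (Quotient.out q) from
      (mk_eq_mk_iff.mpr (by simpa using K.inv_mem hk))]
    exact hout q
  have e2 : π (k' * Quotient.out q') = q' := by
    rw [hπ]
    rw [show (Quotient.mk (QuotientGroup.rightRel K) (k' * Quotient.out q')) =
      Quotient.mk (QuotientGroup.rightRel K) (Quotient.out q') from
      (mk_eq_mk_iff.mpr (by simpa using K.inv_mem hk'))]
    exact hout q'
  rw [← e1, ← e2, hx]

lemma langCard_upper [Fintype A] {Y : Set (G → A)} {K : Subgroup G} (hK : (K : Set G).Finite)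
    (T : Finset G) (V : Set (hK.toFinset → A))
    (hV : ∀ y ∈ Y, ∀ g : G, restrictF hK.toFinset (shift g y) ∈ V)
    (πI : Finset (Quotient (QuotientGroup.rightRel K))) (D : Finset G)
    (hcover : ∀ a ∈ T, a ∈ D ∨ Quotient.mk (QuotientGroup.rightRel K) a ∈ πI) :
    langCard Y T ≤ V.ncard ^ πI.card * (Fintype.card A) ^ D.card := by
  classical
  by_cases hne : (language Y T).Nonempty
  · have hwit : ∀ p : language Y T, ∃ y ∈ Y, restrictF T y = (p : T → A) := fun p => p.2
    choose yw hywY hyw using hwit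
    set Ψ : language Y T → (πI → V) × (D → A) := fun p =>
      (fun q => ⟨restrictF hK.toFinset (shift (Quotient.out q.1) (yw p)),
        hV _ (hywY p) _⟩, fun a => yw p a.1) with hΨ
    have hinj : Function.Injective Ψ := by
      intro p₁ p₂ h
      have h1 := congrArg Prod.fst h
      have h2 := congrArg Prod.snd h
      apply Subtype.ext
      funext a
      rw [← hyw p₁, ← hyw p₂]
      rcases hcover a.1 a.2 with hD | hq
      · exact congrFun h2 ⟨a.1, hD⟩
      · set q := Quotient.mk (QuotientGroup.rightRel K) a.1 with hqdef
        have hk : (a : G) * (Quotient.out q)⁻¹ ∈ K :=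
          mk_eq_mk_iff.mp (Quotient.out_eq q)
        have hkF : (a : G) * (Quotient.out q)⁻¹ ∈ hK.toFinset := hK.mem_toFinset.mpr hk
        have key := congrFun (congrArg Subtype.val (congrFun h1 ⟨q, hq⟩))
          ⟨(a : G) * (Quotient.out q)⁻¹, hkF⟩
        simp only [hΨ, restrictF, shift] at key ⊢
        rw [show ((a : G) * (Quotient.out q)⁻¹) * Quotient.out q = (a : G) from
          inv_mul_cancel_right _ _] at key
        exact key
    have := Nat.card_le_card_of_injective Ψ hinj
    rw [Nat.card_coe_set_eq] at this
    refine le_trans this (le_of_eq ?_)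
    rw [Nat.card_prod, Nat.card_fun, Nat.card_fun, Nat.card_coe_set_eq,
      Nat.card_eq_finsetCard, Nat.card_eq_finsetCard, Nat.card_eq_fintype_card]
  · rw [Set.not_nonempty_iff_eq_empty] at hne
    simp [langCard, hne]

lemma langCard_lower [Fintype A] {X : Set (G → A)} {K : Subgroup G} (hK : (K : Set G).Finite)
    (T : Finset G) (hXne : X.Nonempty)
    (hshift : ∀ g : G, ∀ x ∈ X, shift g x ∈ X)
    (hrecomb : ∀ x : G → A, (∀ g : G, ∃ x' ∈ X, ∀ k ∈ K, x (k * g) = x' (k * g)) → x ∈ X)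
    (πI : Finset (Quotient (QuotientGroup.rightRel K)))
    (hπI : ∀ q ∈ πI, ∀ k ∈ K, k * Quotient.out q ∈ T) :
    (language X hK.toFinset).ncard ^ πI.card ≤ langCard X T := by
  classical
  obtain ⟨x₀, hx₀⟩ := hXne
  set W := language X hK.toFinset with hW
  have hwit : ∀ u : W, ∃ x ∈ X, restrictF hK.toFinset x = (u : hK.toFinset → A) :=
    fun u => u.2
  choose xw hxwX hxw using hwit
  set π : G → Quotient (QuotientGroup.rightRel K) := Quotient.mk (QuotientGroup.rightRel K)
    with hπ
  set bld : (πI → W) → Quotient (QuotientGroup.rightRel K) → (G → A) := fun φ q =>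
    if h : q ∈ πI then xw (φ ⟨q, h⟩) else x₀ with hbld
  have hbldX : ∀ φ q, bld φ q ∈ X := by
    intro φ q
    rw [hbld]
    dsimp only
    split
    · exact hxwX _
    · exact hx₀
  set Φraw : (πI → W) → (G → A) := fun φ g =>
    bld φ (π g) (g * (Quotient.out (π g))⁻¹) with hΦraw
  have hπmul : ∀ (k g : G), k ∈ K → π (k * g) = π g := by
    intro k g hk
    exact mk_eq_mk_iff.mpr (by simpa using K.inv_mem hk)
  have hΦX : ∀ φ, Φraw φ ∈ X := by
    intro φ
    apply hrecomb
    intro g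
    refine ⟨shift (Quotient.out (π g))⁻¹ (bld φ (π g)), hshift _ _ (hbldX φ (π g)), ?_⟩
    intro k hk
    rw [hΦraw]
    dsimp only
    rw [hπmul k g hk]
    rfl
  set Φ : (πI → W) → language X T := fun φ => ⟨restrictF T (Φraw φ), Φraw φ, hΦX φ, rfl⟩
    with hΦ
  have hinj : Function.Injective Φ := by
    intro φ₁ φ₂ h
    have h' : restrictF T (Φraw φ₁) = restrictF T (Φraw φ₂) :=
      congrArg Subtype.val h
    funext qh
    obtain ⟨q, hq⟩ := qh
    apply Subtype.ext
    funext k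
    have hkK : (k : G) ∈ K := hK.mem_toFinset.mp k.2
    have hmemT : (k : G) * Quotient.out q ∈ T := hπI q hq _ hkK
    have keyval : ∀ φ : πI → W, Φraw φ ((k : G) * Quotient.out q) = xw (φ ⟨q, hq⟩) (k : G) := by
      intro φ
      rw [hΦraw]
      dsimp only
      rw [hπmul _ _ hkK, show π (Quotient.out q) = q from Quotient.out_eq q]
      rw [show (k : G) * Quotient.out q * (Quotient.out q)⁻¹ = (k : G) from
        mul_inv_cancel_right _ _]
      rw [hbld]
      dsimp only
      rw [dif_pos hq]
    have e1 : ((φ₁ ⟨q, hq⟩ : hK.toFinset → A)) k = xw (φ₁ ⟨q, hq⟩) (k : G) :=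
      (congrFun (hxw (φ₁ ⟨q, hq⟩)) k).symm
    have e2 : ((φ₂ ⟨q, hq⟩ : hK.toFinset → A)) k = xw (φ₂ ⟨q, hq⟩) (k : G) :=
      (congrFun (hxw (φ₂ ⟨q, hq⟩)) k).symm
    rw [e1, e2, ← keyval φ₁, ← keyval φ₂]
    exact congrFun h' ⟨_, hmemT⟩
  have := Nat.card_le_card_of_injective Φ hinj
  rw [Nat.card_fun, Nat.card_coe_set_eq, Nat.card_eq_finsetCard,
    Nat.card_coe_set_eq] at this
  exact this

end Aux

/-- Over a countable locally finite group, every `G`-SFT is entropy minimal: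
any proper nonempty subshift has strictly smaller entropy. -/
theorem SFT_entropy_minimal_of_locallyFinite [Group G] [Countable G] (hLF : IsLocallyFinite G)
    [Fintype A] [Nonempty A] [TopologicalSpace A] [DiscreteTopology A]
    (X : Set (G → A)) (hX : IsSFT X)
    (Y : Set (G → A)) (hYshift : IsShiftSpace Y) (hYne : Y.Nonempty) (hYX : Y ⊂ X)
    (F : ℕ → Finset G) (hF : IsFolner F) (hX' hY' : ℝ)
    (hentX : Filter.Tendsto
      (fun n => Real.log (langCard X (F n)) / ((F n).card : ℝ)) Filter.atTop (nhds hX'))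
    (hentY : Filter.Tendsto
      (fun n => Real.log (langCard Y (F n)) / ((F n).card : ℝ)) Filter.atTop (nhds hY')) :
    hY' < hX' := by
  classical
  obtain ⟨F₀, P, hXdef⟩ := hX
  have hXshift : ∀ g : G, ∀ x ∈ X, shift g x ∈ X := by
    intro g x hx
    rw [hXdef] at hx ⊢
    intro g'
    rw [shift_shift]
    exact hx (g' * g)
  obtain ⟨y₀, hy₀X, hy₀Y⟩ := Set.exists_of_ssubset hYX
  obtain ⟨E, hE⟩ := exists_sep hYshift.1 hy₀Y
  set K := Subgroup.closure ((E ∪ F₀ : Finset G) : Set G) with hKdef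
  haveI hKfin' : Finite ↥K := hLF (E ∪ F₀)
  have hK : (K : Set G).Finite := Set.toFinite _
  set FK := hK.toFinset with hFKdef
  have hmemFK : ∀ {k : G}, k ∈ FK ↔ k ∈ K := fun {k} => hK.mem_toFinset
  have hEK : ∀ a ∈ E, a ∈ K := fun a ha =>
    Subgroup.subset_closure (by simp [ha])
  have hF₀K : ∀ a ∈ F₀, a ∈ K := fun a ha =>
    Subgroup.subset_closure (by simp [ha])
  set m := FK.card with hm
  have hmpos : 0 < m := Finset.card_pos.mpr ⟨1, hmemFK.mpr K.one_mem⟩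
  set W := language X FK with hWdef
  set N := W.ncard with hNdef
  set w : FK → A := restrictF FK y₀ with hwdef
  have hwW : w ∈ W := ⟨y₀, hy₀X, rfl⟩
  obtain ⟨y₁, hy₁Y⟩ := hYne
  have hy₁X : y₁ ∈ X := hYX.1 hy₁Y
  -- all coset patterns of elements of Y lie in W \ {w}
  have hYV : ∀ y ∈ Y, ∀ g : G, restrictF FK (shift g y) ∈ W \ {w} := by
    intro y hy g
    refine ⟨⟨shift g y, hXshift g y (hYX.1 hy), rfl⟩, ?_⟩
    intro hcontra
    simp only [Set.mem_singleton_iff] at hcontra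
    refine hE (shift g y) ?_ (hYshift.2 g y hy)
    intro a ha
    have haK : a ∈ FK := hmemFK.mpr (hEK a ha)
    exact congrFun hcontra ⟨a, haK⟩
  have hy₁W : restrictF FK y₁ ∈ W \ {w} := by
    have := hYV y₁ hy₁Y 1
    rwa [shift_one] at this
  have hN2 : 2 ≤ N := by
    have h1 : 1 < W.ncard := by
      rw [Set.one_lt_ncard_iff (Set.toFinite W)]
      exact ⟨w, restrictF FK y₁, hwW, hy₁W.1, fun hc => hy₁W.2 (by simp [← hc])⟩
    omega
  -- recombination property of the SFT X
  have hrecomb : ∀ x : G → A,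
      (∀ g : G, ∃ x' ∈ X, ∀ k ∈ K, x (k * g) = x' (k * g)) → x ∈ X := by
    intro x hx
    rw [hXdef]
    intro g
    obtain ⟨x', hx'X, hagree⟩ := hx g
    have heq : restrictF F₀ (shift g x) = restrictF F₀ (shift g x') := by
      funext f
      exact hagree f (hF₀K f f.2)
    rw [heq]
    rw [hXdef] at hx'X
    exact hx'X g
  -- inner parts, quotient images, boundaries
  set π : G → Quotient (QuotientGroup.rightRel K) := Quotient.mk (QuotientGroup.rightRel K)
    with hπdef
  set I : ℕ → Finset G := fun n => (F n).filter (fun a => ∀ k ∈ FK, k * a ∈ F n) with hIdef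
  set πI : ℕ → Finset (Quotient (QuotientGroup.rightRel K)) := fun n => (I n).image π
    with hπIdef
  set D : ℕ → Finset G := fun n => (F n).filter (fun a => ¬ ∀ k ∈ FK, k * a ∈ F n) with hDdef
  have hmemI : ∀ {n a}, a ∈ I n ↔ a ∈ F n ∧ ∀ k ∈ FK, k * a ∈ F n := by
    intro n a; rw [hIdef]; exact Finset.mem_filter
  have hIco : ∀ n, ∀ a ∈ I n, ∀ b : G, b * a⁻¹ ∈ K → b ∈ I n := by
    intro n a ha b hba
    rw [hmemI] at ha ⊢
    constructor
    · have := ha.2 (b * a⁻¹) (hmemFK.mpr hba)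
      rwa [inv_mul_cancel_right] at this
    · intro k hk
      have hkK : k * (b * a⁻¹) ∈ K := K.mul_mem (hmemFK.mp hk) hba
      have := ha.2 _ (hmemFK.mpr hkK)
      rwa [mul_assoc k (b * a⁻¹) a, inv_mul_cancel_right] at this
  have hcardI : ∀ n, (I n).card = (πI n).card * m := by
    intro n
    exact innerCard hK (I n) (hIco n) (πI n) (fun q => by
      rw [hπIdef]; simp [hπdef, Finset.mem_image])
  have hπIT : ∀ n, ∀ q ∈ πI n, ∀ k ∈ K, k * Quotient.out q ∈ F n := by
    intro n q hq k hk
    rw [hπIdef] at hq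
    simp only [Finset.mem_image] at hq
    obtain ⟨a, haI, ha⟩ := hq
    have houtI : Quotient.out q ∈ I n := by
      refine hIco n a haI _ (mk_eq_mk_iff.mp ?_)
      exact ha.trans (Quotient.out_eq q).symm
    exact (hmemI.mp houtI).2 k (hmemFK.mpr hk)
  have hcover : ∀ n, ∀ a ∈ F n, a ∈ D n ∨ π a ∈ πI n := by
    intro n a ha
    by_cases hp : ∀ k ∈ FK, k * a ∈ F n
    · right
      rw [hπIdef]
      exact Finset.mem_image_of_mem π (hmemI.mpr ⟨ha, hp⟩)
    · left
      rw [hDdef]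
      exact Finset.mem_filter.mpr ⟨ha, hp⟩
  -- counting inequalities
  have hlowN : ∀ n, N ^ (πI n).card ≤ langCard X (F n) := by
    intro n
    exact langCard_lower hK (F n) ⟨y₁, hy₁X⟩ hXshift hrecomb (πI n) (hπIT n)
  set M := (W \ {w}).ncard with hMdef
  have hMN : M + 1 = N := by
    have h2 : 2 ≤ W.ncard := hNdef ▸ hN2
    rw [hMdef, hNdef, Set.ncard_diff_singleton_of_mem hwW]
    omega
  have hupN : ∀ n, langCard Y (F n) ≤ M ^ (πI n).card * (Fintype.card A) ^ (D n).card := by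
    intro n
    exact langCard_upper hK (F n) (W \ {w}) hYV (πI n) (D n) (hcover n)
  -- basic positivity
  have hFcpos : ∀ n, (0 : ℝ) < ((F n).card : ℝ) := by
    intro n
    exact_mod_cast Finset.card_pos.mpr (hF.1 n)
  -- the boundary is Følner-small
  set β : ℕ → ℝ := fun n => ((D n).card : ℝ) / ((F n).card : ℝ) with hβdef
  have hβ0 : Filter.Tendsto β Filter.atTop (nhds 0) := by
    have hbound : ∀ n, β n ≤ ∑ k ∈ FK,
        (Set.ncard (((fun h => k * h) '' (F n : Set G)) ∆ ((F n) : Set G)) : ℝ) /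
          ((F n).card : ℝ) := by
      intro n
      have hsubB : D n ⊆ FK.biUnion (fun k => (F n).filter (fun a => k * a ∉ F n)) := by
        intro a ha
        rw [hDdef] at ha
        simp only [Finset.mem_filter] at ha
        push_neg at ha
        obtain ⟨k, hk, hka⟩ := ha.2
        exact Finset.mem_biUnion.mpr ⟨k, hk, Finset.mem_filter.mpr ⟨ha.1, hka⟩⟩
      have hcard1 : (D n).card ≤ ∑ k ∈ FK, ((F n).filter (fun a => k * a ∉ F n)).card :=
        le_trans (Finset.card_le_card hsubB) (Finset.card_biUnion_le)
      have hcard2 : ∀ k : G, (((F n).filter (fun a => k * a ∉ F n)).card : ℕ) ≤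
          Set.ncard (((fun h => k * h) '' (F n : Set G)) ∆ ((F n) : Set G)) := by
        intro k
        have hfin : ((((fun h => k * h) '' (F n : Set G)) ∆ ((F n) : Set G))).Finite :=
          Set.Finite.subset (((F n).finite_toSet.image _).union (F n).finite_toSet)
            Set.symmDiff_subset_union
        have him : (fun a => k * a) '' (((F n).filter (fun a => k * a ∉ F n) : Finset G) : Set G)
            ⊆ ((fun h => k * h) '' (F n : Set G)) ∆ ((F n) : Set G) := by
          rintro x ⟨a, haS, rfl⟩
          simp only [Finset.coe_filter, Set.mem_setOf_eq] at haS
          rw [Set.mem_symmDiff]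
          exact Or.inl ⟨⟨a, haS.1, rfl⟩, haS.2⟩
        calc (((F n).filter (fun a => k * a ∉ F n)).card : ℕ)
            = (((F n).filter (fun a => k * a ∉ F n) : Finset G) : Set G).ncard := by
              rw [Set.ncard_coe_finset]
          _ = ((fun a => k * a) ''
                (((F n).filter (fun a => k * a ∉ F n) : Finset G) : Set G)).ncard := by
              rw [Set.ncard_image_of_injective _ (mul_right_injective k)]
          _ ≤ _ := Set.ncard_le_ncard him hfin
      have hcard3 : ((D n).card : ℝ) ≤ ∑ k ∈ FK,
          (Set.ncard (((fun h => k * h) '' (F n : Set G)) ∆ ((F n) : Set G)) : ℝ) := by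
        calc ((D n).card : ℝ) ≤
            ((∑ k ∈ FK, ((F n).filter (fun a => k * a ∉ F n)).card : ℕ) : ℝ) := by
              exact_mod_cast hcard1
          _ ≤ _ := by
              push_cast
              exact Finset.sum_le_sum (fun k _ => by exact_mod_cast hcard2 k)
      rw [hβdef]
      rw [← Finset.sum_div]
      exact div_le_div_of_nonneg_right hcard3 (hFcpos n).le |>.trans_eq rfl
    have hsum : Filter.Tendsto (fun n => ∑ k ∈ FK,
        (Set.ncard (((fun h => k * h) '' (F n : Set G)) ∆ ((F n) : Set G)) : ℝ) /
          ((F n).card : ℝ)) Filter.atTop (nhds 0) := by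
      have := tendsto_finset_sum FK (fun k (_ : k ∈ FK) => hF.2.2 k)
      rw [Finset.sum_const_zero] at this
      exact this
    refine squeeze_zero (fun n => ?_) hbound hsum
    rw [hβdef]
    exact div_nonneg (Nat.cast_nonneg _) (Nat.cast_nonneg _)
  -- α n → 1/m
  set α : ℕ → ℝ := fun n => (((πI n).card : ℕ) : ℝ) / ((F n).card : ℝ) with hαdef
  have hpart : ∀ n, (I n).card + (D n).card = (F n).card := by
    intro n
    rw [hIdef, hDdef]
    exact Finset.card_filter_add_card_filter_not _
  have hαβ : ∀ n, α n = (1 - β n) / m := by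
    intro n
    have hc : ((πI n).card : ℝ) * m + (D n).card = ((F n).card : ℝ) := by
      have := hpart n
      rw [hcardI n] at this
      exact_mod_cast congrArg (fun t : ℕ => (t : ℝ)) this
    rw [hαdef, hβdef]
    have hFne : ((F n).card : ℝ) ≠ 0 := (hFcpos n).ne'
    have hmne : (m : ℝ) ≠ 0 := by exact_mod_cast hmpos.ne'
    dsimp only
    rw [div_eq_div_iff hFne hmne, sub_mul, one_mul, div_mul_cancel₀ _ hFne]
    linarith [hc]
  have hα0 : Filter.Tendsto α Filter.atTop (nhds (1 / (m : ℝ))) := by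
    have h1 : Filter.Tendsto (fun n => (1 - β n) / (m : ℝ)) Filter.atTop
        (nhds ((1 - 0) / (m : ℝ))) :=
      (tendsto_const_nhds.sub hβ0).div_const _
    rw [show ((1 : ℝ) - 0) / (m : ℝ) = 1 / (m : ℝ) by ring] at h1
    exact Filter.Tendsto.congr (fun n => (hαβ n).symm) h1
  -- lower bound for the X-entropy sequence
  have hfXn : ∀ n, α n * Real.log N ≤ Real.log (langCard X (F n)) / ((F n).card : ℝ) := by
    intro n
    have h1 : ((N : ℝ)) ^ (πI n).card ≤ (langCard X (F n) : ℝ) := by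
      exact_mod_cast hlowN n
    have h2 : Real.log (((N : ℝ)) ^ (πI n).card) ≤ Real.log (langCard X (F n)) :=
      Real.log_le_log (by positivity) h1
    rw [Real.log_pow] at h2
    rw [hαdef]
    rw [div_mul_eq_mul_div]
    exact div_le_div_of_nonneg_right h2 (hFcpos n).le |>.trans_eq rfl
  -- upper bound for the Y-entropy sequence
  have hApos : (0 : ℝ) < (Fintype.card A : ℝ) := by exact_mod_cast Fintype.card_pos
  have hMpos : 0 < M := by clear_value M N; omega
  have hfYn : ∀ n, Real.log (langCard Y (F n)) / ((F n).card : ℝ) ≤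
      α n * Real.log M + β n * Real.log (Fintype.card A) := by
    intro n
    have hYpos : 0 < langCard Y (F n) := by
      rw [langCard]
      rw [Set.ncard_pos (Set.toFinite _)]
      exact ⟨restrictF (F n) y₁, y₁, hy₁Y, rfl⟩
    have h1 : (langCard Y (F n) : ℝ) ≤
        ((M : ℝ)) ^ (πI n).card * ((Fintype.card A : ℝ)) ^ (D n).card := by
      exact_mod_cast hupN n
    have h2 : Real.log (langCard Y (F n)) ≤
        ((πI n).card : ℝ) * Real.log M + ((D n).card : ℝ) * Real.log (Fintype.card A) := by
      have h3 := Real.log_le_log (by exact_mod_cast hYpos) h1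
      rwa [Real.log_mul (pow_ne_zero _ (by exact_mod_cast hMpos.ne')) (pow_ne_zero _ hApos.ne'), Real.log_pow, Real.log_pow] at h3
    rw [hαdef, hβdef, div_mul_eq_mul_div, div_mul_eq_mul_div, ← add_div]
    exact div_le_div_of_nonneg_right h2 (hFcpos n).le |>.trans_eq rfl
  -- pass to the limit
  have hXlow : (1 / (m : ℝ)) * Real.log N ≤ hX' :=
    le_of_tendsto_of_tendsto' (hα0.mul_const _) hentX hfXn
  have hYup : hY' ≤ (1 / (m : ℝ)) * Real.log M + 0 * Real.log (Fintype.card A) :=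
    le_of_tendsto_of_tendsto' hentY ((hα0.mul_const _).add (hβ0.mul_const _)) hfYn
  rw [zero_mul, add_zero] at hYup
  have hstrict : (1 / (m : ℝ)) * Real.log M < (1 / (m : ℝ)) * Real.log N := by
    have hlog : Real.log M < Real.log N := by
      apply Real.log_lt_log (by exact_mod_cast hMpos)
      have hMltN : M < N := by clear_value M N; omega
      exact_mod_cast hMltN
    exact mul_lt_mul_of_pos_left hlog (one_div_pos.mpr (by exact_mod_cast hmpos))
  linarith

end LFPaper
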